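/- Let 0 < γ < 1, c > 0 and t₀ ∈ ℝ, and let f : ℝ → ℝ be differentiable on [t₀, ∞) with f(t) ≥ 0 and f′(t) ≤ −c · f(t)^{2/(1+γ)} for all t ≥ t₀. Then there exists a constant C > 0, depending only on c and γ, such that f(t) ≤ C (t − t₀)^{−(1+γ)/(1−γ)} for all t > t₀; indeed one may take C = ( c(1−γ)/(1+γ) )^{−(1+γ)/(1−γ)}. (Differential-inequality decay estimate established in the proof of Proposition 5.2 of Almaraz–Sun, by showing (d/dt) f^{−(1−γ)/(1+γ)} ≥ c(1−γ)/(1+γ) wherever f > 0.) -/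

import Mathlib

/-- Differential-inequality decay estimate from the proof of Proposition 5.2 of
Almaraz–Sun: if `f ≥ 0` is differentiable on `[t₀, ∞)` with
`f′(t) ≤ −c f(t)^{2/(1+γ)}` there, `0 < γ < 1`, `c > 0`, then for all `t > t₀`,
`f(t) ≤ C (t−t₀)^{−(1+γ)/(1−γ)}` with `C = (c(1−γ)/(1+γ))^{−(1+γ)/(1−γ)}`. -/
theorem stmt14 (γ c t₀ : ℝ) (hγ0 : 0 < γ) (hγ1 : γ < 1) (hc : 0 < c) (f : ℝ → ℝ)
    (hdiff : DifferentiableOn ℝ f (Set.Ici t₀))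
    (hf0 : ∀ t, t₀ ≤ t → 0 ≤ f t)
    (hf' : ∀ t, t₀ ≤ t → derivWithin f (Set.Ici t₀) t ≤ -c * f t ^ (2 / (1 + γ))) :
    ∀ t, t₀ < t →
      f t ≤ (c * (1 - γ) / (1 + γ)) ^ (-(1 + γ) / (1 - γ)) *
        (t - t₀) ^ (-(1 + γ) / (1 - γ)) := by
  intro t ht
  have h1γ : (0:ℝ) < 1 + γ := by linarith
  have h1γ' : (0:ℝ) < 1 - γ := by linarith
  set α : ℝ := (1 - γ) / (1 + γ) with hα_def
  have hα : 0 < α := div_pos h1γ' h1γ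
  have htt : 0 < t - t₀ := by linarith
  set z : ℝ := -(1 + γ) / (1 - γ) with hz_def
  have hz : z ≤ 0 := by
    rw [hz_def]
    apply div_nonpos_of_nonpos_of_nonneg <;> linarith
  have hαz : -α * z = 1 := by
    rw [hα_def, hz_def]; field_simp
  have hderiv_eq : ∀ x, t₀ < x → derivWithin f (Set.Ici t₀) x = deriv f x := by
    intro x hx
    exact derivWithin_of_mem_nhds (Ici_mem_nhds hx)
  have hdA : ∀ x, t₀ < x → deriv f x ≤ -c * f x ^ (2 / (1 + γ)) := by
    intro x hx; rw [← hderiv_eq x hx]; exact hf' x hx.le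
  have hcont : ContinuousOn f (Set.Icc t₀ t) :=
    hdiff.continuousOn.mono Set.Icc_subset_Ici_self
  have hanti : AntitoneOn f (Set.Ici t₀) := by
    apply antitoneOn_of_deriv_nonpos (convex_Ici t₀) hdiff.continuousOn
    · rw [interior_Ici]
      exact fun x hx =>
        ((hdiff x (Set.mem_Ici.2 (le_of_lt (Set.mem_Ioi.1 hx)))).differentiableAt (Ici_mem_nhds (Set.mem_Ioi.1 hx))).differentiableWithinAt
    · rw [interior_Ici]
      intro x hx
      have h1 := hdA x hx
      have h0 : 0 ≤ f x ^ (2 / (1 + γ)) := Real.rpow_nonneg (hf0 x hx.le) _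
      nlinarith
  rcases eq_or_lt_of_le (hf0 t ht.le) with h0 | hpos
  · rw [← h0]
    positivity
  have hfpos : ∀ x ∈ Set.Icc t₀ t, 0 < f x := by
    intro x hx
    have := hanti (Set.mem_Ici.2 hx.1) (Set.mem_Ici.2 (hx.1.trans hx.2)) hx.2
    linarith
  set g : ℝ → ℝ := fun s => f s ^ (-α) with hg
  have hgd : ∀ x ∈ Set.Ioo t₀ t,
      HasDerivAt g (-α * f x ^ (-α - 1) * deriv f x) x := by
    intro x hx
    have hfx : 0 < f x := hfpos x ⟨hx.1.le, hx.2.le⟩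
    have hfd : HasDerivAt f (deriv f x) x :=
      ((hdiff x (le_of_lt hx.1)).differentiableAt (Ici_mem_nhds hx.1)).hasDerivAt
    have h := hfd.rpow_const (p := -α) (Or.inl hfx.ne')
    convert h using 1
    ring
  have hgderiv : ∀ x ∈ Set.Ioo t₀ t, α * c ≤ deriv g x := by
    intro x hx
    have hfx : 0 < f x := hfpos x ⟨hx.1.le, hx.2.le⟩
    rw [(hgd x hx).deriv]
    have hd := hdA x hx.1
    have hpow : 0 < f x ^ (-α - 1) := Real.rpow_pos_of_pos hfx _
    have hsum : f x ^ (-α - 1) * f x ^ (2 / (1 + γ)) = 1 := by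
      rw [← Real.rpow_add hfx]
      have he : -α - 1 + 2 / (1 + γ) = 0 := by
        rw [hα_def]; field_simp; ring
      rw [he, Real.rpow_zero]
    have key : -α * f x ^ (-α - 1) * (-c * f x ^ (2 / (1 + γ))) = α * c := by
      linear_combination α * c * hsum
    nlinarith [mul_le_mul_of_nonpos_left hd
      (by nlinarith : -α * f x ^ (-α - 1) ≤ 0)]
  have hgcont : ContinuousOn g (Set.Icc t₀ t) := by
    apply ContinuousOn.rpow_const hcont
    intro x hx; exact Or.inl (hfpos x hx).ne'
  have hgdiff : DifferentiableOn ℝ g (interior (Set.Icc t₀ t)) := by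
    rw [interior_Icc]
    exact fun x hx => ((hgd x hx).differentiableAt).differentiableWithinAt
  have hMVT := (convex_Icc t₀ t).mul_sub_le_image_sub_of_le_deriv hgcont hgdiff
    (by rw [interior_Icc]; exact hgderiv) t₀ (Set.left_mem_Icc.2 ht.le)
    t (Set.right_mem_Icc.2 ht.le) ht.le
  have hgt0 : 0 ≤ g t₀ := Real.rpow_nonneg (hf0 t₀ le_rfl) _
  have hb : α * c * (t - t₀) ≤ f t ^ (-α) := by
    have : g t₀ + α * c * (t - t₀) ≤ g t := by linarith
    calc α * c * (t - t₀) ≤ g t := by linarith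
    _ = f t ^ (-α) := rfl
  have hab : 0 < α * c * (t - t₀) := by positivity
  have hfin := Real.rpow_le_rpow_of_nonpos hab hb hz
  have hleft : (f t ^ (-α)) ^ z = f t := by
    rw [← Real.rpow_mul hpos.le, hαz, Real.rpow_one]
  have hright : (α * c * (t - t₀)) ^ z =
      (c * (1 - γ) / (1 + γ)) ^ z * (t - t₀) ^ z := by
    rw [Real.mul_rpow (by positivity) htt.le]
    congr 2
    rw [hα_def]; ring
  rw [hleft, hright] at hfin
  exact hfin
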